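/- Let E ⊆ ℝ² be a compact set such that the projections E_ω := {x·ω : x ∈ E} and E_{ω'} := {x·ω' : x ∈ E} both have Lebesgue measure zero, where ω, ω' ∈ S¹ are distinct and not antipodal. Then E is purely unrectifiable: for every pair of orthonormal vectors ω₁, ω₂ ∈ S¹ and every Lipschitz function F : ℝ → ℝ, the set {x ∈ ℝ : x·ω₁ + F(x)·ω₂ ∈ E} has Lebesgue measure zero. -/

import Mathlib

open MeasureTheory
open scoped ENNReal NNReal

/-- The dot product on ℝ². -/
def dot (x y : ℝ × ℝ) : ℝ := x.1 * y.1 + x.2 * y.2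

/-- Key lemma: if `g` has a nonvanishing derivative at every point of a measurable set `S`
whose image is Lebesgue-null, then `S` is Lebesgue-null. -/
lemma null_of_image_null (g d : ℝ → ℝ) (S : Set ℝ) (hS : MeasurableSet S)
    (hmeasd : Measurable d)
    (hd : ∀ x ∈ S, HasDerivAt g (d x) x) (h0 : ∀ x ∈ S, d x ≠ 0)
    (him : volume (g '' S) = 0) : volume S = 0 := by
  classical
  rcases Set.eq_empty_or_nonempty S with rfl | hne
  · simp
  set f' : ℝ → (ℝ →L[ℝ] ℝ) := fun x => ContinuousLinearMap.smulRight (1 : ℝ →L[ℝ] ℝ) (d x)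
    with hf'def
  have hf' : ∀ x ∈ S, HasFDerivWithinAt g (f' x) S x := fun x hx =>
    ((hd x hx).hasFDerivAt).hasFDerivWithinAt
  set r : (ℝ →L[ℝ] ℝ) → ℝ≥0 := fun A => if A = 0 then 1 else ‖A‖₊ / 2 with hrdef
  have rpos : ∀ A, r A ≠ 0 := by
    intro A
    by_cases h : A = 0
    · simp [hrdef, h]
    · simp [hrdef, if_neg h, div_eq_zero_iff, nnnorm_eq_zero, h]
  obtain ⟨t, A, t_disj, t_meas, t_cover, t_approx, hA⟩ :=
    exists_partition_approximatesLinearOn_of_hasFDerivWithinAt g S f' hf' r rpos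
  have key : ∀ n, volume (S ∩ t n) = 0 := by
    intro n
    obtain ⟨y, hy, hAy⟩ := hA hne n
    have hdy : d y ≠ 0 := h0 y hy
    have hAne : A n ≠ 0 := by
      intro h
      apply hdy
      have := congrFun (congrArg (fun (T : ℝ →L[ℝ] ℝ) => (T : ℝ → ℝ)) (hAy.symm.trans h)) 1
      simpa [hf'def] using this
    have hnorm : ‖A n‖ = |d y| := by
      rw [hAy]
      simp [hf'def, ContinuousLinearMap.norm_smulRight_apply, Real.norm_eq_abs]
    have hrA : ((r (A n) : ℝ≥0) : ℝ) = |d y| / 2 := by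
      have hr' : r (A n) = ‖A n‖₊ / 2 := by simp only [hrdef, if_neg hAne]
      rw [hr', NNReal.coe_div, coe_nnnorm, hnorm]
      norm_num
    -- injectivity on the piece
    have hinj : Set.InjOn g (S ∩ t n) := by
      intro x hx z hz hxz
      have happ := t_approx n x hx z hz
      rw [hxz] at happ
      have hval : ‖A n (x - z)‖ = |d y| * |x - z| := by
        rw [hAy]
        simp only [hf'def, ContinuousLinearMap.smulRight_apply, ContinuousLinearMap.one_apply,
          smul_eq_mul, Real.norm_eq_abs, abs_mul]
        ring
      rw [sub_self, zero_sub, norm_neg, hval, hrA] at happ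
      have habs : |d y| > 0 := abs_pos.mpr hdy
      have hxz0 : |x - z| = 0 := by
        rw [Real.norm_eq_abs] at happ
        nlinarith [abs_nonneg (x - z)]
      have := abs_eq_zero.mp hxz0
      linarith [sub_eq_zero.mp this]
    have hmeasSt : MeasurableSet (S ∩ t n) := hS.inter (t_meas n)
    have hfd : ∀ x ∈ S ∩ t n, HasFDerivWithinAt g (f' x) (S ∩ t n) x := fun x hx =>
      (hf' x hx.1).mono Set.inter_subset_left
    have hint : (∫⁻ x in S ∩ t n, ENNReal.ofReal |(f' x).det| ∂volume) ≤
        volume (g '' (S ∩ t n)) :=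
      lintegral_abs_det_fderiv_le_addHaar_image volume hmeasSt hfd hinj
    have him' : volume (g '' (S ∩ t n)) = 0 :=
      measure_mono_null (Set.image_mono Set.inter_subset_left) him
    have hzero : (∫⁻ x in S ∩ t n, ENNReal.ofReal |d x| ∂volume) = 0 := by
      have : (∫⁻ x in S ∩ t n, ENNReal.ofReal |(f' x).det| ∂volume) = 0 :=
        le_antisymm (him' ▸ hint) zero_le
      simpa [hf'def, ContinuousLinearMap.smulRight_one_eq_toSpanSingleton,
        ContinuousLinearMap.det_toSpanSingleton] using this
    have hmeasInt : Measurable fun x => ENNReal.ofReal |d x| :=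
      (hmeasd.abs).ennreal_ofReal
    have hae := (lintegral_eq_zero_iff hmeasInt).mp hzero
    rw [Filter.EventuallyEq, ae_iff] at hae
    have hsub : S ∩ t n ⊆ {x | ¬ (fun x => ENNReal.ofReal |d x|) x = (0 : ℝ → ℝ≥0∞) x} := by
      intro x hx
      simp only [Set.mem_setOf_eq, Pi.zero_apply, ENNReal.ofReal_eq_zero, not_le]
      exact abs_pos.mpr (h0 x hx.1)
    rw [Measure.restrict_apply' hmeasSt] at hae
    exact measure_mono_null (Set.subset_inter hsub subset_rfl) hae
  have hScover : S ⊆ ⋃ n, S ∩ t n := by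
    intro x hx
    obtain ⟨_, ⟨n, rfl⟩, hn⟩ := t_cover hx
    exact Set.mem_iUnion.mpr ⟨n, hx, hn⟩
  exact measure_mono_null hScover (measure_iUnion_null key)

set_option maxHeartbeats 1000000 in
/-- Algebra lemma: if a single slope `t` kills the projections of both `ω` and `ω'` onto the
orthonormal frame `ω₁, ω₂`, then `ω = ±ω'`. -/
lemma alg_lemma (ω ω' ω₁ ω₂ : ℝ × ℝ) (hω : dot ω ω = 1) (hω' : dot ω' ω' = 1)
    (h₁ : dot ω₁ ω₁ = 1) (h₂ : dot ω₂ ω₂ = 1) (h₁₂ : dot ω₁ ω₂ = 0) (t : ℝ)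
    (e1 : dot ω ω₁ + dot ω ω₂ * t = 0) (e2 : dot ω' ω₁ + dot ω' ω₂ * t = 0) :
    ω = ω' ∨ ω = -ω' := by
  obtain ⟨u, v⟩ := ω; obtain ⟨u', v'⟩ := ω'
  obtain ⟨p, q⟩ := ω₁; obtain ⟨r, s⟩ := ω₂
  simp only [dot] at *
  have step1 : (p * s - q * r) ^ 2 = 1 := by
    linear_combination (r * r + s * s) * h₁ + h₂ - (p * r + q * s) * h₁₂
  have step2 : (p * s - q * r) * (u * v' - u' * v) = 0 := by
    linear_combination (u' * r + v' * s) * e1 - (u * r + v * s) * e2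
  have step3 : u * v' - u' * v = 0 := by
    linear_combination (p * s - q * r) * step2 - (u * v' - u' * v) * step1
  have step4 : (u * u' + v * v') ^ 2 = 1 := by
    linear_combination (u' * u' + v' * v') * hω + hω' - (u * v' - u' * v) * step3
  have step5 : (u * u' + v * v' - 1) * (u * u' + v * v' + 1) = 0 := by
    linear_combination step4
  rcases mul_eq_zero.mp step5 with h | h
  · left
    have hsum : (u - u') ^ 2 + (v - v') ^ 2 = 0 := by linear_combination hω + hω' - 2 * h
    have h1 : u = u' := by nlinarith [sq_nonneg (u - u'), sq_nonneg (v - v')]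
    have h2 : v = v' := by nlinarith [sq_nonneg (u - u'), sq_nonneg (v - v')]
    simp [h1, h2, Prod.ext_iff]
  · right
    have hsum : (u + u') ^ 2 + (v + v') ^ 2 = 0 := by linear_combination hω + hω' + 2 * h
    have h1 : u = -u' := by nlinarith [sq_nonneg (u + u'), sq_nonneg (v + v')]
    have h2 : v = -v' := by nlinarith [sq_nonneg (u + u'), sq_nonneg (v + v')]
    simp [h1, h2, Prod.ext_iff]

/-- Two projection theorem: a compact planar set with two projections of Lebesgue
measure zero, in distinct and non-antipodal unit directions, is purely unrectifiable. -/
theorem stmt4 (E : Set (ℝ × ℝ)) (hE : IsCompact E) (ω ω' : ℝ × ℝ)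
    (hω : dot ω ω = 1) (hω' : dot ω' ω' = 1) (hne : ω ≠ ω') (hna : ω ≠ -ω')
    (h1 : volume ((fun x => dot x ω) '' E) = 0)
    (h2 : volume ((fun x => dot x ω') '' E) = 0) :
    ∀ ω₁ ω₂ : ℝ × ℝ, dot ω₁ ω₁ = 1 → dot ω₂ ω₂ = 1 → dot ω₁ ω₂ = 0 →
      ∀ (F : ℝ → ℝ) (M : ℝ≥0), LipschitzWith M F →
        volume {x : ℝ | x • ω₁ + F x • ω₂ ∈ E} = 0 := by
  intro ω₁ ω₂ h₁ h₂ h₁₂ F M hF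
  set γ : ℝ → ℝ × ℝ := fun x => x • ω₁ + F x • ω₂ with hγdef
  set Aset : Set ℝ := {x : ℝ | γ x ∈ E} with hAdef
  have hγcont : Continuous γ := by
    apply Continuous.add
    · exact continuous_id.smul continuous_const
    · exact hF.continuous.smul continuous_const
  have hAmeas : MeasurableSet Aset :=
    (hE.isClosed.preimage hγcont).measurableSet
  set D : Set ℝ := {x : ℝ | DifferentiableAt ℝ F x} with hDdef
  have hDmeas : MeasurableSet D := measurableSet_of_differentiableAt ℝ F
  have hDae : volume Dᶜ = 0 := by
    have h := hF.ae_differentiableAt (μ := volume)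
    rw [ae_iff] at h
    simpa [hDdef, Set.compl_setOf] using h
  set dF : ℝ → ℝ := deriv F with hdFdef
  have hdFmeas : Measurable dF := measurable_deriv F
  -- the two slope functions
  set d1 : ℝ → ℝ := fun x => dot ω ω₁ + dot ω ω₂ * dF x with hd1def
  set d2 : ℝ → ℝ := fun x => dot ω' ω₁ + dot ω' ω₂ * dF x with hd2def
  have hd1meas : Measurable d1 := measurable_const.add (measurable_const.mul hdFmeas)
  have hd2meas : Measurable d2 := measurable_const.add (measurable_const.mul hdFmeas)
  -- the two projection compositions
  have proj : ∀ (w : ℝ × ℝ) (x : ℝ),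
      dot (γ x) w = dot w ω₁ * x + dot w ω₂ * F x := by
    intro w x
    simp only [hγdef, dot, Prod.fst_add, Prod.snd_add, Prod.smul_fst, Prod.smul_snd,
      smul_eq_mul]
    ring
  -- the good sets
  have piece : ∀ (w : ℝ × ℝ), volume ((fun x => dot x w) '' E) = 0 →
      volume (Aset ∩ D ∩ {x | dot w ω₁ + dot w ω₂ * dF x ≠ 0}) = 0 := by
    intro w hw
    set S : Set ℝ := Aset ∩ D ∩ {x | dot w ω₁ + dot w ω₂ * dF x ≠ 0} with hSdef
    have hSmeas : MeasurableSet S := by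
      apply (hAmeas.inter hDmeas).inter
      have : Measurable fun x => dot w ω₁ + dot w ω₂ * dF x :=
        measurable_const.add (measurable_const.mul hdFmeas)
      exact (this (measurableSet_singleton 0)).compl
    set g : ℝ → ℝ := fun x => dot w ω₁ * x + dot w ω₂ * F x with hgdef
    have hder : ∀ x ∈ S, HasDerivAt g (dot w ω₁ + dot w ω₂ * dF x) x := by
      intro x hx
      have hdiff : DifferentiableAt ℝ F x := hx.1.2
      have hFd : HasDerivAt F (dF x) x := hdiff.hasDerivAt
      have := ((hasDerivAt_id x).const_mul (dot w ω₁)).add (hFd.const_mul (dot w ω₂))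
      simp only [mul_one] at this
      exact this
    have himg : volume (g '' S) = 0 := by
      apply measure_mono_null _ hw
      rintro _ ⟨x, hx, rfl⟩
      exact ⟨γ x, hx.1.1, proj w x⟩
    exact null_of_image_null g (fun x => dot w ω₁ + dot w ω₂ * dF x) S hSmeas
      (measurable_const.add (measurable_const.mul hdFmeas)) hder (fun x hx => hx.2) himg
  have hp1 := piece ω h1
  have hp2 := piece ω' h2
  -- covering
  have hcover : Aset ⊆ (Aset ∩ D ∩ {x | dot ω ω₁ + dot ω ω₂ * dF x ≠ 0}) ∪
      (Aset ∩ D ∩ {x | dot ω' ω₁ + dot ω' ω₂ * dF x ≠ 0}) ∪ Dᶜ := by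
    intro x hx
    by_cases hxD : x ∈ D
    · by_cases hz1 : dot ω ω₁ + dot ω ω₂ * dF x = 0
      · by_cases hz2 : dot ω' ω₁ + dot ω' ω₂ * dF x = 0
        · exfalso
          rcases alg_lemma ω ω' ω₁ ω₂ hω hω' h₁ h₂ h₁₂ (dF x) hz1 hz2 with h | h
          · exact hne h
          · exact hna h
        · exact Or.inl (Or.inr ⟨⟨hx, hxD⟩, hz2⟩)
      · exact Or.inl (Or.inl ⟨⟨hx, hxD⟩, hz1⟩)
    · exact Or.inr hxD
  refine measure_mono_null hcover ?_
  refine measure_union_null (measure_union_null hp1 hp2) hDae
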